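/- For x > 0 and 0 < β < 1, (1+x)^{1+β} < 1 + (1+β)x + x^{1+β}. -/

import Mathlib

open Real

/-- Strict subadditivity lemma: `(1+x)^β < 1 + x^β` for `x > 0`, `0 < β < 1`. -/
lemma aux_subadd (x β : ℝ) (hx : 0 < x) (hβ0 : 0 < β) (hβ1 : β < 1) :
    (1 + x) ^ β < 1 + x ^ β := by
  have h1x : (0:ℝ) < 1 + x := by linarith
  have key : (1 + x) ^ β = (1 + x) ^ (β - 1) + x * (1 + x) ^ (β - 1) := by
    have : (1 + x) ^ (β - 1) * (1 + x) = (1 + x) ^ β := by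
      rw [Real.rpow_sub_one (ne_of_gt h1x)]
      field_simp
    rw [← this]; ring
  have hβn : β - 1 < 0 := by linarith
  have h2 : (1 + x) ^ (β - 1) < 1 := by
    have := Real.rpow_lt_rpow_of_neg one_pos (by linarith : (1:ℝ) < 1 + x) hβn
    simpa using this
  have h3 : (1 + x) ^ (β - 1) < x ^ (β - 1) :=
    Real.rpow_lt_rpow_of_neg hx (by linarith) hβn
  have h4 : x * (1 + x) ^ (β - 1) < x ^ β := by
    calc x * (1 + x) ^ (β - 1) < x * x ^ (β - 1) := by
          exact mul_lt_mul_of_pos_left h3 hx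
      _ = x ^ β := by
          rw [Real.rpow_sub_one (ne_of_gt hx)]
          field_simp
  linarith [key, h2, h4]

/-- For `x > 0` and `0 < β < 1`, `(1+x)^{1+β} < 1 + (1+β)x + x^{1+β}`. -/
theorem one_add_rpow_one_add_lt (x β : ℝ) (hx : 0 < x) (hβ0 : 0 < β) (hβ1 : β < 1) :
    (1 + x) ^ (1 + β) < 1 + (1 + β) * x + x ^ (1 + β) := by
  set F : ℝ → ℝ := fun t => 1 + (1 + β) * t + t ^ (1 + β) - (1 + t) ^ (1 + β) with hF
  have hderiv : ∀ t : ℝ, HasDerivAt F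
      ((1 + β) + (1 + β) * t ^ β - (1 + β) * (1 + t) ^ β) t := by
    intro t
    have h1 : HasDerivAt (fun t : ℝ => t ^ (1 + β)) ((1 + β) * t ^ (1 + β - 1)) t :=
      Real.hasDerivAt_rpow_const (Or.inr (by linarith))
    have h2 : HasDerivAt (fun t : ℝ => (1 + t) ^ (1 + β))
        ((1 + β) * (1 + t) ^ (1 + β - 1) * 1) t := by
      exact (Real.hasDerivAt_rpow_const (p := 1 + β) (x := 1 + t)
        (Or.inr (by linarith))).comp t (by simpa using (hasDerivAt_id t).const_add (1:ℝ))
    have h0 : HasDerivAt (fun t : ℝ => 1 + (1 + β) * t) (1 + β) t := by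
      simpa using ((hasDerivAt_id t).const_mul (1 + β)).const_add 1
    have := (h0.add h1).sub h2
    simp only [add_sub_cancel_left] at h1 h2 this ⊢
    exact this.congr_deriv (by ring)
  have hcont : ContinuousOn F (Set.Ici 0) := fun t _ =>
    ((hderiv t).continuousAt).continuousWithinAt
  have hmono : StrictMonoOn F (Set.Ici 0) := by
    apply strictMonoOn_of_hasDerivWithinAt_pos (convex_Ici 0) hcont
      (fun t _ => (hderiv t).hasDerivWithinAt)
    intro t ht
    rw [interior_Ici] at ht
    have hsub := aux_subadd t β ht hβ0 hβ1
    have : (1 + t) ^ β < 1 + t ^ β := hsub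
    nlinarith
  have hF0 : F 0 = 0 := by
    simp [hF, Real.zero_rpow (by linarith : (1:ℝ) + β ≠ 0), Real.one_rpow]
  have := hmono (Set.self_mem_Ici) (Set.mem_Ici.mpr hx.le) hx
  rw [hF0] at this
  simp only [hF] at this
  linarith
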